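/- For every real number n ≥ 0, and for all s ∈ ℝ and t > 0, L̂_d applied to the function (s,t) ↦ t^{n+1/2} Ê(s,t) equals (n+1) t^{n−1/2} Ê(s,t). -/

import Mathlib

/-- The complementary error function `erfc z = (2/√π) ∫_z^∞ e^{-u²} du`. -/
noncomputable def erfc (z : ℝ) : ℝ :=
  (2 / Real.sqrt Real.pi) * ∫ u in Set.Ioi z, Real.exp (-u ^ 2)

/-- `ψ̂₀(s,t) = erfc((d(t)-s)/(2√(εt)))`. -/
noncomputable def psi0 (ε : ℝ) (d : ℝ → ℝ) (s t : ℝ) : ℝ :=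
  erfc ((d t - s) / (2 * Real.sqrt (ε * t)))

/-- `Ê(s,t) = exp(-(s-d(t))²/(4εt))`. -/
noncomputable def Ehat (ε : ℝ) (d : ℝ → ℝ) (s t : ℝ) : ℝ :=
  Real.exp (-(s - d t) ^ 2 / (4 * ε * t))

/-- The operator `L̂_d F = -ε F_ss + â(d(t),t) F_s + F_t`. -/
noncomputable def Ld (ε : ℝ) (a : ℝ → ℝ → ℝ) (d : ℝ → ℝ) (F : ℝ → ℝ → ℝ) (s t : ℝ) : ℝ :=
  -ε * iteratedDeriv 2 (fun x => F x t) s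
    + a (d t) t * deriv (fun x => F x t) s
    + deriv (fun τ => F s τ) t

lemma hasDerivAt_Egauss (ε c t : ℝ) (x : ℝ) :
    HasDerivAt (fun x => Real.exp (-(x - c) ^ 2 / (4 * ε * t)))
      ((-(2 * (x - c)) / (4 * ε * t)) * Real.exp (-(x - c) ^ 2 / (4 * ε * t))) x := by
  have h1 : HasDerivAt (fun x : ℝ => -(x - c) ^ 2 / (4 * ε * t)) (-(2 * (x - c)) / (4 * ε * t)) x := by
    have h2 : HasDerivAt (fun x : ℝ => (x - c) ^ 2) (2 * (x - c)) x := by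
      have : HasDerivAt (fun x : ℝ => (x - c) ^ 2) _ x := ((hasDerivAt_id x).sub_const c).pow 2
      simpa using this
    simpa [neg_div] using (h2.neg).div_const (4 * ε * t)
  simpa [mul_comm] using h1.exp

/-- for every real `n ≥ 0`, `Ld` applied to the function
`(s,t) ↦ t^(n+1/2) * Ehat s t` equals `(n+1) t^(n-1/2) Ehat s t`. -/
theorem stmt_3
    (ε d₀ : ℝ) (hε : 0 < ε) (hd₀ : d₀ ∈ Set.Ioo (0 : ℝ) 1)
    (a : ℝ → ℝ → ℝ) (haC1 : ContDiff ℝ 1 (fun p : ℝ × ℝ => a p.1 p.2))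
    (hapos : ∀ s t : ℝ, 0 ≤ t → 0 < a s t)
    (d : ℝ → ℝ) (hdC1 : ContDiff ℝ 1 d)
    (hdODE : ∀ t : ℝ, 0 ≤ t → HasDerivAt d (a (d t) t) t)
    (hd0 : d 0 = d₀) :
    ∀ n : ℝ, 0 ≤ n → ∀ s t : ℝ, 0 < t →
      Ld ε a d (fun s' t' => t' ^ (n + 1 / 2) * Ehat ε d s' t') s t
        = (n + 1) * t ^ (n - 1 / 2) * Ehat ε d s t := by
  intro n hn s t ht
  have hεt : (4 : ℝ) * ε * t ≠ 0 := by positivity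
  set c := d t with hc
  set k := 4 * ε * t with hk
  set C := t ^ (n + 1 / 2) with hC
  set E : ℝ → ℝ := fun x => Real.exp (-(x - c) ^ 2 / k) with hE
  -- first s-derivative of x ↦ C * E x
  have hds : ∀ x : ℝ, HasDerivAt (fun x => C * E x) (C * ((-(2 * (x - c)) / k) * E x)) x := by
    intro x
    exact (hasDerivAt_Egauss ε c t x).const_mul C
  have hderiv1 : deriv (fun x => C * E x) = fun x => C * ((-(2 * (x - c)) / k) * E x) := by
    funext x; exact (hds x).deriv
  -- second s-derivative
  have hds2 : HasDerivAt (fun x => C * ((-(2 * (x - c)) / k) * E x))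
      (C * ((-2 / k) * E s + (-(2 * (s - c)) / k) * ((-(2 * (s - c)) / k) * E s))) s := by
    have hg : HasDerivAt (fun x : ℝ => -(2 * (x - c)) / k) (-2 / k) s := by
      have : HasDerivAt (fun x : ℝ => -(2 * (x - c))) (-2) s := by
        have h : HasDerivAt (fun x : ℝ => -(2 * (x - c))) _ s := (((hasDerivAt_id s).sub_const c).const_mul 2).neg
        simpa using h
      simpa using this.div_const k
    have : HasDerivAt (fun x => C * ((-(2 * (x - c)) / k) * E x)) _ s := (hg.mul (hasDerivAt_Egauss ε c t s)).const_mul C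
    convert this using 1 <;> ring
  -- time derivative
  have hd' : HasDerivAt d (a (d t) t) t := hdODE t ht.le
  have hnum : HasDerivAt (fun τ => -(s - d τ) ^ 2) (2 * (s - d t) * a (d t) t) t := by
    have h2 : HasDerivAt (fun τ : ℝ => (s - d τ) ^ 2) (2 * (s - d t) * (-(a (d t) t))) t := by
      have : HasDerivAt (fun τ : ℝ => (s - d τ) ^ 2) _ t := (((hasDerivAt_const t s).sub hd').pow 2)
      simpa [mul_comm, mul_assoc] using this
    have : HasDerivAt (fun τ => -(s - d τ) ^ 2) _ t := h2.neg
    convert this using 1 <;> ring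
  have hden : HasDerivAt (fun τ : ℝ => 4 * ε * τ) (4 * ε) t := by
    simpa using (hasDerivAt_id t).const_mul (4 * ε)
  have hu : HasDerivAt (fun τ => -(s - d τ) ^ 2 / (4 * ε * τ))
      ((2 * (s - d t) * a (d t) t * (4 * ε * t) - (-(s - d t) ^ 2) * (4 * ε)) / (4 * ε * t) ^ 2) t :=
    hnum.div hden hεt
  have hpow : HasDerivAt (fun τ : ℝ => τ ^ (n + 1 / 2)) ((n + 1 / 2) * t ^ (n + 1 / 2 - 1)) t :=
    Real.hasDerivAt_rpow_const (Or.inl ht.ne')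
  have hdt : HasDerivAt (fun τ => τ ^ (n + 1 / 2) * Real.exp (-(s - d τ) ^ 2 / (4 * ε * τ)))
      ((n + 1 / 2) * t ^ (n + 1 / 2 - 1) * E s
        + C * (E s * ((2 * (s - d t) * a (d t) t * k - (-(s - d t) ^ 2) * (4 * ε)) / k ^ 2))) t := by
    have : HasDerivAt (fun τ => τ ^ (n + 1 / 2) * Real.exp (-(s - d τ) ^ 2 / (4 * ε * τ))) _ t := hpow.mul hu.exp
    simpa [hE, hc, hk, hC] using this
  -- assemble
  have hF1 : (fun x => (fun s' t' => t' ^ (n + 1 / 2) * Ehat ε d s' t') x t) = fun x => C * E x := by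
    funext x; simp [Ehat, hE, hc, hk, hC]
  have hF2 : (fun τ => (fun s' t' => t' ^ (n + 1 / 2) * Ehat ε d s' t') s τ)
      = fun τ => τ ^ (n + 1 / 2) * Real.exp (-(s - d τ) ^ 2 / (4 * ε * τ)) := by
    funext τ; simp [Ehat]
  rw [Ld, hF1, hF2]
  rw [iteratedDeriv_succ, iteratedDeriv_one, hderiv1, hds2.deriv, hdt.deriv]
  simp only []
  have hEs : Ehat ε d s t = E s := by simp [Ehat, hE, hc, hk]
  rw [hEs]
  have hexp : t ^ (n + 1 / 2 - 1) = t ^ (n - 1 / 2) := by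
    rw [show n + 1 / 2 - 1 = n - 1 / 2 by ring]
  have hCsplit : C = t ^ (n - 1 / 2) * t := by
    rw [hC, ← Real.rpow_add_one ht.ne', show n - 1 / 2 + 1 = n + 1 / 2 by ring]
  rw [hexp, hCsplit]
  have hεne : ε ≠ 0 := hε.ne'
  have htne : t ≠ 0 := ht.ne'
  rw [hk]
  field_simp
  ring
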